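/- For fixed n, x with 0 ≤ x < n, and p ∈ (0,1) with 0 < P(N ≤ x) < 1 for N ~ Binomial(n,p), the derivative of the binomial CDF F(p) = Σ_{k=0}^x C(n,k)p^k(1-p)^{n-k} satisfies dF/dp ≤ -P(N ≤ x)(1-P(N ≤ x))/(p(1-p)) < 0. -/

import Mathlib

/-- The probability mass function of a Binomial(n, p) random variable at k. -/
def binomPMF (n : ℕ) (p : ℝ) (k : ℕ) : ℝ :=
  (n.choose k : ℝ) * p ^ k * (1 - p) ^ (n - k)

/-- The CDF of a Binomial(n, p) random variable evaluated at x. -/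
def binomCDF (n x : ℕ) (p : ℝ) : ℝ :=
  ∑ k ∈ Finset.range (x + 1), (n.choose k : ℝ) * p ^ k * (1 - p) ^ (n - k)

lemma binomPMF_nonneg (n : ℕ) {p : ℝ} (hp0 : 0 ≤ p) (hp1 : p ≤ 1) (k : ℕ) :
    0 ≤ binomPMF n p k := by
  unfold binomPMF
  have h1 : (0:ℝ) ≤ 1 - p := by linarith
  positivity

lemma binomPMF_total (n : ℕ) (p : ℝ) :
    ∑ k ∈ Finset.range (n + 1), binomPMF n p k = 1 := by
  have h := add_pow p (1 - p) n
  simp only [add_sub_cancel, one_pow] at h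
  unfold binomPMF
  conv_rhs => rw [h]
  apply Finset.sum_congr rfl
  intro k _
  ring

lemma binomPMF_mean (n : ℕ) (p : ℝ) :
    ∑ k ∈ Finset.range (n + 1), (k : ℝ) * binomPMF n p k = n * p := by
  cases n with
  | zero => simp [binomPMF]
  | succ m =>
    rw [Finset.sum_range_succ']
    simp only [Nat.cast_zero, zero_mul, add_zero]
    have key : ∀ j ∈ Finset.range (m + 1),
        ((j + 1 : ℕ) : ℝ) * binomPMF (m + 1) p (j + 1)
          = ((m + 1 : ℕ) : ℝ) * p * binomPMF m p j := by
      intro j hj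
      unfold binomPMF
      have hc : ((j + 1 : ℕ) : ℝ) * ((m + 1).choose (j + 1) : ℝ)
          = ((m + 1 : ℕ) : ℝ) * (m.choose j : ℝ) := by
        rw [← Nat.cast_mul, ← Nat.cast_mul, mul_comm (j+1), Nat.add_one_mul_choose_eq]
      have hsub : m + 1 - (j + 1) = m - j := by omega
      rw [hsub]
      linear_combination (p ^ (j + 1) * (1 - p) ^ (m - j)) * hc
    rw [Finset.sum_congr rfl key, ← Finset.mul_sum, binomPMF_total]
    push_cast
    ring

lemma binomCDF_hasDeriv (n x : ℕ) {p : ℝ} (hp0 : 0 < p) (hp1 : p < 1) (hx : x < n) :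
    HasDerivAt (fun q : ℝ => binomCDF n x q)
      ((∑ k ∈ Finset.range (x + 1), ((k : ℝ) - n * p) * binomPMF n p k) / (p * (1 - p))) p := by
  have hp : p ≠ 0 := ne_of_gt hp0
  have h1p : (1 : ℝ) - p ≠ 0 := by linarith
  have hterm : ∀ k ∈ Finset.range (x + 1),
      HasDerivAt (fun q : ℝ => (n.choose k : ℝ) * q ^ k * (1 - q) ^ (n - k))
        (((k : ℝ) - n * p) * binomPMF n p k / (p * (1 - p))) p := by
    intro k hk
    have hkx : k ≤ x := Nat.lt_succ_iff.mp (Finset.mem_range.mp hk)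
    have hkn : k ≤ n := le_of_lt (lt_of_le_of_lt hkx hx)
    have hnk : 1 ≤ n - k := by omega
    have h1 : HasDerivAt (fun q : ℝ => (n.choose k : ℝ) * q ^ k)
        ((n.choose k : ℝ) * ((k : ℝ) * p ^ (k - 1))) p :=
      (hasDerivAt_pow k p).const_mul _
    have h2 : HasDerivAt (fun q : ℝ => (1 - q) ^ (n - k))
        (((n - k : ℕ) : ℝ) * (1 - p) ^ (n - k - 1) * (-1)) p := by
      have hsub : HasDerivAt (fun q : ℝ => 1 - q) (-1) p := by
        simpa using (hasDerivAt_id p).const_sub 1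
      exact (hasDerivAt_pow (n - k) (1 - p)).comp p hsub
    have h3 := h1.mul h2
    refine h3.congr_deriv ?_
    have e1 : (k : ℝ) * p ^ (k - 1) = (k : ℝ) * p ^ k / p := by
      cases k with
      | zero => simp
      | succ j => rw [pow_succ]; field_simp; ring_nf; simp
    have e2 : ((n - k : ℕ) : ℝ) * (1 - p) ^ (n - k - 1)
        = ((n - k : ℕ) : ℝ) * (1 - p) ^ (n - k) / (1 - p) := by
      have : n - k = (n - k - 1) + 1 := by omega
      rw [this]; rw [pow_succ]; field_simp; ring; simp
    rw [e1, e2]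
    unfold binomPMF
    have hcast : ((n - k : ℕ) : ℝ) = (n : ℝ) - k := by
      rw [Nat.cast_sub hkn]
    rw [hcast]
    field_simp
    ring
  have := HasDerivAt.fun_sum hterm
  simpa [binomCDF, Finset.sum_div] using this

theorem stmt_17 (n x : ℕ) (p : ℝ) (hp0 : 0 < p) (hp1 : p < 1) (hx : x < n)
    (Ple : ℝ) (hPle : Ple = ∑ k ∈ Finset.range (x + 1), binomPMF n p k)
    (hPle0 : 0 < Ple) (hPle1 : Ple < 1) :
    deriv (fun q : ℝ => binomCDF n x q) p ≤ -(Ple * (1 - Ple)) / (p * (1 - p)) ∧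
    -(Ple * (1 - Ple)) / (p * (1 - p)) < 0 := by
  have hpq : 0 < p * (1 - p) := mul_pos hp0 (by linarith)
  constructor
  · rw [(binomCDF_hasDeriv n x hp0 hp1 hx).deriv]
    rw [div_le_div_iff_of_pos_right hpq]
    -- numerator inequality
    set S := ∑ k ∈ Finset.range (x + 1), (k : ℝ) * binomPMF n p k with hS
    set T := ∑ k ∈ Finset.Ico (x + 1) (n + 1), (k : ℝ) * binomPMF n p k with hT
    set G := ∑ k ∈ Finset.Ico (x + 1) (n + 1), binomPMF n p k with hG
    have hsplit : ∀ (f : ℕ → ℝ), ∑ k ∈ Finset.range (x + 1), f k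
        + ∑ k ∈ Finset.Ico (x + 1) (n + 1), f k = ∑ k ∈ Finset.range (n + 1), f k := by
      intro f
      rw [Finset.range_eq_Ico, Finset.range_eq_Ico]
      exact Finset.sum_Ico_consecutive f (Nat.zero_le (x + 1)) (by omega : x + 1 ≤ n + 1)
    have hFG : Ple + G = 1 := by
      rw [hPle, hG, hsplit, binomPMF_total]
    have hST : S + T = n * p := by
      rw [hS, hT, hsplit, binomPMF_mean]
    have hnonneg : ∀ k, 0 ≤ binomPMF n p k :=
      binomPMF_nonneg n (le_of_lt hp0) (le_of_lt hp1)
    have hSx : S ≤ (x : ℝ) * Ple := by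
      rw [hPle, Finset.mul_sum]
      apply Finset.sum_le_sum
      intro k hk
      have hkx : (k : ℝ) ≤ x := by
        exact_mod_cast Nat.lt_succ_iff.mp (Finset.mem_range.mp hk)
      exact mul_le_mul_of_nonneg_right hkx (hnonneg k)
    have hTx : ((x : ℝ) + 1) * G ≤ T := by
      rw [hG, Finset.mul_sum]
      apply Finset.sum_le_sum
      intro k hk
      have hkx : (x : ℝ) + 1 ≤ k := by
        exact_mod_cast (Finset.mem_Ico.mp hk).1
      exact mul_le_mul_of_nonneg_right hkx (hnonneg k)
    have hGpos : 0 < G := by linarith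
    have hexp : ∑ k ∈ Finset.range (x + 1), ((k : ℝ) - n * p) * binomPMF n p k
        = S - n * p * Ple := by
      rw [hS, hPle, Finset.mul_sum, ← Finset.sum_sub_distrib]
      apply Finset.sum_congr rfl
      intro k _
      ring
    rw [hexp]
    have hG1 : G = 1 - Ple := by linarith
    have h1 : S * (1 - Ple) ≤ (x : ℝ) * Ple * (1 - Ple) :=
      mul_le_mul_of_nonneg_right hSx (by linarith)
    have h2 : ((x : ℝ) + 1) * (1 - Ple) * Ple ≤ T * Ple := by
      have := mul_le_mul_of_nonneg_right hTx (le_of_lt hPle0)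
      rw [hG1] at this
      linarith
    nlinarith [h1, h2, hST]
  · apply div_neg_of_neg_of_pos _ hpq
    have : 0 < Ple * (1 - Ple) := mul_pos hPle0 (by linarith)
    linarith
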